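/- arXiv:2410.18592 — 6 statements merged into one kernel-verified Lean document; each statement's English description precedes it below -/
import Mathlib

section
/- Let $\mathcal{A}$ be an order-$m$, dimension-$n$ complex tensor and let $x=(x_1,\dots,x_n)$ be a vector with all $x_i > 0$. Then for every $i$, $\sum_{\delta_{i i_2\cdots i_m}=0} |a_{i i_2\cdots i_m}| x_{i_2}\cdots x_{i_m} \le \sum_{j=1}^{n} s_{ij}(\mathcal{A})\, x_j^{m-1}$. -/
open Finset

noncomputable def tDiag {n k : ℕ} (A : Fin n → (Fin k → Fin n) → ℂ) (i : Fin n) : ℝ :=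
  ‖A i (fun _ => i)‖

noncomputable def tRow {n k : ℕ} (A : Fin n → (Fin k → Fin n) → ℂ) (i : Fin n) : ℝ :=
  ∑ α ∈ univ.filter (fun α : Fin k → Fin n => α ≠ fun _ => i), ‖A i α‖

noncomputable def tS {n k : ℕ} (A : Fin n → (Fin k → Fin n) → ℂ) (i j : Fin n) : ℝ :=
  (1 / (k : ℝ)) * ∑ t : Fin k,
    ∑ α ∈ univ.filter (fun α : Fin k → Fin n => α t = j ∧ α ≠ fun _ => i),
      ‖A i α‖

noncomputable def tP {n k : ℕ} (A : Fin n → (Fin k → Fin n) → ℂ) (i : Fin n) : ℝ :=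
  ∑ j ∈ univ.erase i, tS A i j

noncomputable def tQ {n k : ℕ} (A : Fin n → (Fin k → Fin n) → ℂ) (i : Fin n) : ℝ :=
  ∑ j ∈ univ.erase i, tS A j i

def IsHTensor {n k : ℕ} (A : Fin n → (Fin k → Fin n) → ℂ) : Prop :=
  ∃ y : Fin n → ℝ, (∀ i, 0 < y i) ∧ ∀ i,
    (∑ α ∈ univ.filter (fun α : Fin k → Fin n => α ≠ fun _ => i),
        ‖A i α‖ * ∏ t, y (α t)) < tDiag A i * y i ^ k

def IsHEig {n k : ℕ} (A : Fin n → (Fin k → Fin n) → ℂ) (lam : ℝ) : Prop :=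
  ∃ x : Fin n → ℝ, x ≠ 0 ∧ ∀ i,
    (∑ α : Fin k → Fin n, A i α * ∏ t, (x (α t) : ℂ)) = (lam : ℂ) * (x i : ℂ) ^ k

theorem stmt2 {n k : ℕ} (hk : 1 ≤ k) (A : Fin n → (Fin k → Fin n) → ℂ)
    (x : Fin n → ℝ) (hx : ∀ i, 0 < x i) (i : Fin n) :
    (∑ α ∈ univ.filter (fun α : Fin k → Fin n => α ≠ fun _ => i),
        ‖A i α‖ * ∏ t, x (α t)) ≤ ∑ j, tS A i j * x j ^ k := by
  have hkR : (0:ℝ) < (k:ℝ) := by exact_mod_cast hk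
  have key : ∀ α : Fin k → Fin n, (∏ t, x (α t)) ≤ (1/(k:ℝ)) * ∑ t, x (α t)^k := by
    intro α
    have h := Real.geom_mean_le_arith_mean_weighted univ (fun _ : Fin k => 1/(k:ℝ))
      (fun t => x (α t)^k) (fun _ _ => one_div_nonneg.mpr hkR.le)
      (by rw [Finset.sum_const, Finset.card_univ, Fintype.card_fin, nsmul_eq_mul,
        mul_one_div, div_self hkR.ne'])
      (fun t _ => pow_nonneg (hx _).le k)
    calc ∏ t, x (α t) = ∏ t, (x (α t)^k) ^ ((1:ℝ)/(k:ℝ)) := by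
          refine Finset.prod_congr rfl fun t _ => ?_
          rw [← Real.rpow_natCast (x (α t)) k, ← Real.rpow_mul (hx _).le,
            mul_one_div, div_self hkR.ne', Real.rpow_one]
      _ ≤ ∑ t, (1/(k:ℝ)) * (x (α t)^k) := h
      _ = (1/(k:ℝ)) * ∑ t, x (α t)^k := by rw [Finset.mul_sum]
  have hfib : ∀ t : Fin k,
      (∑ j, ∑ α ∈ univ.filter (fun α : Fin k → Fin n => α t = j ∧ α ≠ fun _ => i),
        ‖A i α‖ * x j ^ k)
      = ∑ α ∈ univ.filter (fun α : Fin k → Fin n => α ≠ fun _ => i),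
        ‖A i α‖ * x (α t) ^ k := by
    intro t
    have h1 : ∀ j, (univ.filter (fun α : Fin k → Fin n => α t = j ∧ α ≠ fun _ => i))
        = (univ.filter (fun α : Fin k → Fin n => α ≠ fun _ => i)).filter
            (fun α => α t = j) := by
      intro j; rw [Finset.filter_filter]
      exact Finset.filter_congr fun α _ => by tauto
    calc (∑ j, ∑ α ∈ univ.filter (fun α : Fin k → Fin n => α t = j ∧ α ≠ fun _ => i),
          ‖A i α‖ * x j ^ k)
        = ∑ j, ∑ α ∈ (univ.filter (fun α : Fin k → Fin n => α ≠ fun _ => i)).filter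
            (fun α => α t = j), ‖A i α‖ * x (α t) ^ k := by
          refine Finset.sum_congr rfl fun j _ => ?_
          rw [← h1 j]
          refine Finset.sum_congr rfl fun α hα => ?_
          rw [(Finset.mem_filter.1 hα).2.1]
      _ = _ := Finset.sum_fiberwise _ _ _
  calc (∑ α ∈ univ.filter (fun α : Fin k → Fin n => α ≠ fun _ => i),
        ‖A i α‖ * ∏ t, x (α t))
      ≤ ∑ α ∈ univ.filter (fun α : Fin k → Fin n => α ≠ fun _ => i),
        ‖A i α‖ * ((1/(k:ℝ)) * ∑ t, x (α t)^k) :=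
        Finset.sum_le_sum fun α _ => mul_le_mul_of_nonneg_left (key α) (norm_nonneg _)
    _ = (1/(k:ℝ)) * ∑ t : Fin k, ∑ α ∈ univ.filter (fun α : Fin k → Fin n => α ≠ fun _ => i),
          ‖A i α‖ * x (α t)^k := by
        have h2 : ∀ α : Fin k → Fin n, ‖A i α‖ * ((1/(k:ℝ)) * ∑ t, x (α t)^k)
            = (1/(k:ℝ)) * ∑ t, ‖A i α‖ * x (α t)^k := by
          intro α; rw [Finset.mul_sum, Finset.mul_sum, Finset.mul_sum]
          exact Finset.sum_congr rfl fun t _ => by ring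
        simp only [h2]
        rw [← Finset.mul_sum, Finset.sum_comm]
    _ = ∑ j, tS A i j * x j ^ k := by
        have h3 : ∀ j, tS A i j * x j ^ k
            = (1/(k:ℝ)) * ∑ t : Fin k, ∑ α ∈ univ.filter
                (fun α : Fin k → Fin n => α t = j ∧ α ≠ fun _ => i),
                ‖A i α‖ * x j ^ k := by
          intro j
          simp only [tS]
          rw [mul_assoc]
          congr 1
          rw [Finset.sum_mul]
          exact Finset.sum_congr rfl fun t _ => by rw [Finset.sum_mul]
        simp only [h3]
        rw [← Finset.mul_sum]
        congr 1
        refine (Finset.sum_comm.trans ?_).symm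
        exact Finset.sum_congr rfl fun t _ => hfib t
end

section
/- Let $\mathcal{A} \in \mathbb{C}^{[m\times n]}$ with tensor-generated matrix $A$, and let $\gamma \in [0,1]$. If $A$ is strictly product $\gamma$-diagonally dominant—that is, $|a_{i\cdots i}|-s_{ii}(\mathcal{A}) > (P_i(A))^{\gamma}(Q_i(A))^{1-\gamma}$ for all $i$, where $P_i(A)=\sum_{j\ne i} s_{ij}(\mathcal{A})$ and $Q_i(A)=\sum_{j\ne i} s_{ji}(\mathcal{A})$—then $\mathcal{A}$ is an $H$-tensor. -/
open Finset

variable {n : ℕ}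

def rowP (S : Fin n → Fin n → ℝ) (i : Fin n) : ℝ := ∑ j ∈ univ.erase i, S i j
def colQ (S : Fin n → Fin n → ℝ) (i : Fin n) : ℝ := ∑ j ∈ univ.erase i, S j i

lemma swap_sum (f : Fin n → Fin n → ℝ) :
    ∑ i, ∑ j ∈ univ.erase i, f i j = ∑ j, ∑ i ∈ univ.erase j, f i j := by
  simp_rw [← Finset.filter_ne', Finset.sum_filter]
  rw [Finset.sum_comm]
  exact Finset.sum_congr rfl fun j _ => Finset.sum_congr rfl fun i _ =>
    if_congr ne_comm rfl rfl

lemma coreA (c : Fin n → ℝ) (S : Fin n → Fin n → ℝ) (hS : ∀ i j, 0 ≤ S i j)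
    (γ : ℝ) (hγ0 : 0 ≤ γ) (hγ1 : γ ≤ 1)
    (hdom : ∀ i, rowP S i ^ γ * colQ S i ^ (1 - γ) < c i)
    (x : Fin n → ℝ) (hx : ∀ i, 0 ≤ x i)
    (hMx : ∀ i, c i * x i ≤ ∑ j ∈ univ.erase i, S i j * x j) : x = 0 := by
  have hPnn : ∀ i, 0 ≤ rowP S i := fun i => Finset.sum_nonneg fun j _ => hS i j
  have hQnn : ∀ i, 0 ≤ colQ S i := fun i => Finset.sum_nonneg fun j _ => hS j i
  have hc : ∀ i, 0 < c i := fun i =>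
    lt_of_le_of_lt (mul_nonneg (Real.rpow_nonneg (hPnn i) _) (Real.rpow_nonneg (hQnn i) _)) (hdom i)
  by_contra hne
  have h0 : ∃ i, 0 < x i := by
    by_contra h
    push_neg at h
    exact hne (funext fun i => le_antisymm (h i) (hx i))
  obtain ⟨i₀, hi₀⟩ := h0
  rcases eq_or_lt_of_le hγ1 with hγtop | hγlt
  · -- γ = 1
    subst hγtop
    have hdom' : ∀ i, rowP S i < c i := by
      intro i; have := hdom i; simpa using this
    obtain ⟨i, -, hmax⟩ := Finset.exists_max_image univ x ⟨i₀, mem_univ _⟩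
    have hxi : 0 < x i := lt_of_lt_of_le hi₀ (hmax i₀ (mem_univ _))
    have h1 : ∑ j ∈ univ.erase i, S i j * x j ≤ rowP S i * x i := by
      rw [rowP, Finset.sum_mul]
      exact Finset.sum_le_sum fun j _ => mul_le_mul_of_nonneg_left (hmax j (mem_univ _)) (hS i j)
    have h2 : rowP S i * x i < c i * x i := mul_lt_mul_of_pos_right (hdom' i) hxi
    have := hMx i
    linarith
  rcases eq_or_lt_of_le hγ0 with hγbot | hγpos
  · -- γ = 0
    have hγbot' : γ = 0 := hγbot.symm
    subst hγbot'
    have hdom' : ∀ i, colQ S i < c i := by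
      intro i; have := hdom i; simpa using this
    have h1 : ∑ i, c i * x i ≤ ∑ j, colQ S j * x j := by
      calc ∑ i, c i * x i ≤ ∑ i, ∑ j ∈ univ.erase i, S i j * x j :=
            Finset.sum_le_sum fun i _ => hMx i
        _ = ∑ j, ∑ i ∈ univ.erase j, S i j * x j := swap_sum _
        _ = ∑ j, colQ S j * x j := by
            refine Finset.sum_congr rfl fun j _ => ?_
            rw [colQ, Finset.sum_mul]
    have h2 : ∑ j, colQ S j * x j < ∑ j, c j * x j :=
      Finset.sum_lt_sum (fun j _ => mul_le_mul_of_nonneg_right (hdom' j).le (hx j))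
        ⟨i₀, mem_univ _, mul_lt_mul_of_pos_right (hdom' i₀) hi₀⟩
    linarith
  · -- 0 < γ < 1
    have h1γ : 0 < 1 - γ := by linarith
    have hp : 1 ≤ (1-γ)⁻¹ := by
      have := inv_anti₀ h1γ (by linarith : 1 - γ ≤ 1)
      simpa using this
    set u : Fin n → ℝ := fun j => x j ^ (1-γ)⁻¹ with hu_def
    have hu : ∀ j, 0 ≤ u j := fun j => Real.rpow_nonneg (hx j) _
    have hsum_nn : ∀ i, 0 ≤ ∑ j ∈ univ.erase i, S i j * u j :=
      fun i => Finset.sum_nonneg fun j _ => mul_nonneg (hS i j) (hu j)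
    have hui : ∀ i, u i ^ (1 - γ) = x i := by
      intro i
      show (x i ^ (1-γ)⁻¹) ^ (1 - γ) = x i
      rw [← Real.rpow_mul (hx i), inv_mul_cancel₀ (ne_of_gt h1γ), Real.rpow_one]
    have key_lt : ∀ i, 0 < x i → colQ S i * u i < ∑ j ∈ univ.erase i, S i j * u j := by
      intro i hxi
      have hPpos : 0 < rowP S i := by
        rcases (hPnn i).lt_or_eq with h | h
        · exact h
        · exfalso
          have hz : ∀ j ∈ univ.erase i, S i j = 0 :=
            (Finset.sum_eq_zero_iff_of_nonneg (fun j _ => hS i j)).mp h.symm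
          have : ∑ j ∈ univ.erase i, S i j * x j = 0 :=
            Finset.sum_eq_zero fun j hj => by rw [hz j hj, zero_mul]
          have := hMx i
          nlinarith [hc i]
      have hHolder : ∑ j ∈ univ.erase i, S i j * x j ≤
          rowP S i ^ γ * (∑ j ∈ univ.erase i, S i j * u j) ^ (1 - γ) := by
        have := Real.inner_le_weight_mul_Lp_of_nonneg (univ.erase i) hp (S i) x
          (fun j => hS i j) hx
        rwa [inv_inv, sub_sub_cancel] at this
      have h2 : rowP S i ^ γ * (colQ S i * u i) ^ (1 - γ) <
          rowP S i ^ γ * (∑ j ∈ univ.erase i, S i j * u j) ^ (1 - γ) := by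
        have e1 : (colQ S i * u i) ^ (1 - γ) = colQ S i ^ (1 - γ) * x i := by
          rw [Real.mul_rpow (hQnn i) (hu i), hui i]
        rw [e1]
        calc rowP S i ^ γ * (colQ S i ^ (1 - γ) * x i)
            = rowP S i ^ γ * colQ S i ^ (1 - γ) * x i := by ring
          _ < c i * x i := mul_lt_mul_of_pos_right (hdom i) hxi
          _ ≤ ∑ j ∈ univ.erase i, S i j * x j := hMx i
          _ ≤ _ := hHolder
      have h3 : (colQ S i * u i) ^ (1 - γ) <
          (∑ j ∈ univ.erase i, S i j * u j) ^ (1 - γ) :=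
        lt_of_mul_lt_mul_left h2 (Real.rpow_nonneg (hPnn i) γ)
      by_contra hcon
      push_neg at hcon
      exact absurd (Real.rpow_le_rpow (hsum_nn i) hcon h1γ.le) (not_le.mpr h3)
    have key_le : ∀ i, colQ S i * u i ≤ ∑ j ∈ univ.erase i, S i j * u j := by
      intro i
      rcases (hx i).lt_or_eq with hxi | hxi
      · exact (key_lt i hxi).le
      · have : u i = 0 := by
          show x i ^ (1-γ)⁻¹ = 0
          rw [← hxi, Real.zero_rpow (by positivity : ((1:ℝ)-γ)⁻¹ ≠ 0)]
        rw [this, mul_zero]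
        exact hsum_nn i
    have hlt : ∑ i, colQ S i * u i < ∑ i, ∑ j ∈ univ.erase i, S i j * u j :=
      Finset.sum_lt_sum (fun i _ => key_le i) ⟨i₀, mem_univ _, key_lt i₀ hi₀⟩
    have heq : ∑ i, ∑ j ∈ univ.erase i, S i j * u j = ∑ j, colQ S j * u j := by
      rw [swap_sum]
      exact Finset.sum_congr rfl fun j _ => by rw [colQ, Finset.sum_mul]
    rw [heq] at hlt
    exact lt_irrefl _ hlt

variable {n : ℕ}

noncomputable def Mlin (c : Fin n → ℝ) (S : Fin n → Fin n → ℝ) :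
    (Fin n → ℝ) →ₗ[ℝ] (Fin n → ℝ) where
  toFun z := fun i => c i * z i - ∑ j ∈ univ.erase i, S i j * z j
  map_add' a b := by
    funext i
    simp only [Pi.add_apply, mul_add]
    rw [Finset.sum_add_distrib]
    ring
  map_smul' r a := by
    funext i
    simp only [Pi.smul_apply, smul_eq_mul, RingHom.id_apply]
    rw [show (∑ j ∈ univ.erase i, S i j * (r * a j)) = r * ∑ j ∈ univ.erase i, S i j * a j by
      rw [Finset.mul_sum]; exact Finset.sum_congr rfl fun j _ => by ring]
    ring

lemma coreExists (c : Fin n → ℝ) (S : Fin n → Fin n → ℝ) (hS : ∀ i j, 0 ≤ S i j)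
    (γ : ℝ) (hγ0 : 0 ≤ γ) (hγ1 : γ ≤ 1)
    (hdom : ∀ i, rowP S i ^ γ * colQ S i ^ (1 - γ) < c i) :
    ∃ z : Fin n → ℝ, ∀ i, ∑ j ∈ univ.erase i, S i j * z j < c i * z i := by
  by_contra hcon
  push_neg at hcon
  -- separation setup
  set s : Set (Fin n → ℝ) := Set.univ.pi (fun _ : Fin n => Set.Ioi (0:ℝ)) with hs_def
  have hs_mem : ∀ p : Fin n → ℝ, p ∈ s ↔ ∀ i, 0 < p i := by
    intro p
    simp [hs_def, Set.mem_pi]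
  have hs₁ : Convex ℝ s := convex_pi fun i _ => convex_Ioi 0
  have hs₂ : IsOpen s := isOpen_set_pi Set.finite_univ fun i _ => isOpen_Ioi
  set t : Set (Fin n → ℝ) := (LinearMap.range (Mlin c S) : Set (Fin n → ℝ)) with ht_def
  have ht : Convex ℝ t := (LinearMap.range (Mlin c S)).convex
  have disj : Disjoint s t := by
    rw [Set.disjoint_left]
    rintro p hp ⟨z, rfl⟩
    obtain ⟨i, hi⟩ := hcon z
    have := (hs_mem _).mp hp i
    have : (0:ℝ) < c i * z i - ∑ j ∈ univ.erase i, S i j * z j := this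
    linarith
  obtain ⟨f, u, hfs, hft⟩ := geometric_hahn_banach_open hs₁ hs₂ ht disj
  have hu0 : u ≤ 0 := by
    have := hft 0 (Submodule.zero_mem _)
    simpa using this
  have hg : ∀ z, f (Mlin c S z) = 0 := by
    intro z
    by_contra ha
    have h1 : ∀ r : ℝ, u ≤ r * f (Mlin c S z) := by
      intro r
      have := hft (Mlin c S (r • z)) ⟨r • z, rfl⟩
      rwa [map_smul, map_smul, smul_eq_mul] at this
    have := h1 ((u - 1) / f (Mlin c S z))
    rw [div_mul_cancel₀ _ ha] at this
    linarith
  set e : Fin n → (Fin n → ℝ) := fun j => Pi.single j 1 with he_def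
  have hcl : ∀ p : Fin n → ℝ, (∀ i, 0 ≤ p i) → f p ≤ u := by
    intro p hp
    have hsub : s ⊆ {q : Fin n → ℝ | f q ≤ u} := fun q hq => (hfs q hq).le
    have hclosed : IsClosed {q : Fin n → ℝ | f q ≤ u} :=
      isClosed_le f.continuous continuous_const
    have hmem : p ∈ closure s := by
      rw [hs_def, closure_pi_set]
      intro i _
      simpa [closure_Ioi] using hp i
    exact closure_minimal hsub hclosed hmem
  have hfe : ∀ j, f (e j) ≤ 0 := by
    intro j
    refine le_trans (hcl (e j) fun i => ?_) hu0
    rw [he_def]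
    by_cases h : i = j <;> simp [Pi.single_apply, h]
  set x : Fin n → ℝ := fun j => -f (e j) with hx_def
  have hxnn : ∀ j, 0 ≤ x j := fun j => neg_nonneg.mpr (hfe j)
  have hrepr : ∀ z : Fin n → ℝ, f z = ∑ j, z j * f (e j) := by
    intro z
    have hz : z = ∑ j, z j • e j := by
      funext i
      simp [he_def, Pi.single_apply, Finset.sum_apply]
    calc f z = f (∑ j, z j • e j) := by rw [← hz]
      _ = ∑ j, z j * f (e j) := by
          rw [map_sum]
          exact Finset.sum_congr rfl fun j _ => by rw [map_smul, smul_eq_mul]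
  have hMe : ∀ j i, Mlin c S (e j) i =
      (if i = j then c i else 0) - (if i = j then 0 else S i j) := by
    intro j i
    show c i * e j i - ∑ l ∈ univ.erase i, S i l * e j l = _
    have he_app : ∀ l, e j l = if l = j then (1:ℝ) else 0 := fun l => Pi.single_apply j 1 l
    by_cases h : i = j
    · subst h
      have : ∑ l ∈ univ.erase i, S i l * e i l = 0 :=
        Finset.sum_eq_zero fun l hl => by
          rw [he_app l, if_neg (Finset.ne_of_mem_erase hl), mul_zero]
      rw [this, he_app, if_pos rfl, mul_one]
      simp
    · have h1 : ∑ l ∈ univ.erase i, S i l * e j l = S i j := by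
        rw [Finset.sum_eq_single_of_mem j (Finset.mem_erase.mpr ⟨Ne.symm h, mem_univ _⟩)]
        · rw [he_app, if_pos rfl, mul_one]
        · intro l _ hlj
          rw [he_app, if_neg hlj, mul_zero]
      rw [h1, he_app, if_neg h, mul_zero, if_neg h, if_neg h]
  have hj : ∀ j, c j * x j ≤ ∑ i ∈ univ.erase j, S i j * x i := by
    intro j
    have h0 : f (Mlin c S (e j)) = 0 := hg _
    rw [hrepr] at h0
    have h1 : ∑ i, Mlin c S (e j) i * f (e i) =
        c j * f (e j) - ∑ i ∈ univ.erase j, S i j * f (e i) := by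
      simp_rw [hMe, sub_mul]
      rw [Finset.sum_sub_distrib]
      congr 1
      · rw [Finset.sum_congr rfl (fun i _ => by
          rw [ite_mul, zero_mul] : ∀ _ ∈ univ, _ = _)]
        rw [Finset.sum_ite_eq' univ j (fun i => c i * f (e i)), if_pos (mem_univ _)]
      · rw [← Finset.filter_ne' univ j, Finset.sum_filter]
        refine Finset.sum_congr rfl fun i _ => ?_
        by_cases h : i = j <;> simp [h]
    rw [h1] at h0
    have hfx : ∀ i, f (e i) = -x i := fun i => (neg_neg _).symm
    simp only [hfx, mul_neg] at h0
    have h2 : ∑ i ∈ univ.erase j, -(S i j * x i) = -∑ i ∈ univ.erase j, S i j * x i := by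
      rw [Finset.sum_neg_distrib]
    rw [h2] at h0
    linarith
  have hx0 : x = 0 := by
    refine coreA c (fun i j => S j i) (fun i j => hS j i) (1 - γ) (by linarith) (by linarith)
      (fun i => ?_) x hxnn (fun i => hj i)
    have : rowP (fun i j => S j i) i = colQ S i := rfl
    rw [this]
    have : colQ (fun i j => S j i) i = rowP S i := rfl
    rw [this, sub_sub_cancel, mul_comm]
    exact hdom i
  have hone : f (fun _ => (1:ℝ)) < u := hfs _ ((hs_mem _).mpr fun i => one_pos)
  have : f (fun _ => (1:ℝ)) = 0 := by
    rw [hrepr]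
    refine Finset.sum_eq_zero fun j _ => ?_
    have : f (e j) = -x j := (neg_neg _).symm
    rw [this, hx0]
    simp
  linarith

lemma coreMain (c : Fin n → ℝ) (S : Fin n → Fin n → ℝ) (hS : ∀ i j, 0 ≤ S i j)
    (γ : ℝ) (hγ0 : 0 ≤ γ) (hγ1 : γ ≤ 1)
    (hdom : ∀ i, rowP S i ^ γ * colQ S i ^ (1 - γ) < c i) :
    ∃ z : Fin n → ℝ, (∀ i, 0 < z i) ∧
      ∀ i, ∑ j ∈ univ.erase i, S i j * z j < c i * z i := by
  obtain ⟨z, hz⟩ := coreExists c S hS γ hγ0 hγ1 hdom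
  refine ⟨z, ?_, hz⟩
  set x : Fin n → ℝ := fun i => max (-z i) 0 with hx_def
  have hxnn : ∀ i, 0 ≤ x i := fun i => le_max_right _ _
  have hMx : ∀ i, c i * x i ≤ ∑ j ∈ univ.erase i, S i j * x j := by
    intro i
    have hbound : ∀ j, -(S i j * z j) ≤ S i j * x j := fun j => by
      rw [← mul_neg]
      exact mul_le_mul_of_nonneg_left (le_max_left _ _) (hS i j)
    rcases le_or_gt (z i) 0 with h | h
    · have hxi : x i = -z i := max_eq_left (by linarith)
      rw [hxi, mul_neg]
      calc -(c i * z i) ≤ -∑ j ∈ univ.erase i, S i j * z j := by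
            have := hz i; linarith
        _ = ∑ j ∈ univ.erase i, -(S i j * z j) := (Finset.sum_neg_distrib _).symm
        _ ≤ ∑ j ∈ univ.erase i, S i j * x j := Finset.sum_le_sum fun j _ => hbound j
    · have hxi : x i = 0 := max_eq_right (by linarith)
      rw [hxi, mul_zero]
      exact Finset.sum_nonneg fun j _ => mul_nonneg (hS i j) (hxnn j)
  have hx0 : x = 0 := coreA c S hS γ hγ0 hγ1 hdom x hxnn hMx
  have hznn : ∀ i, 0 ≤ z i := by
    intro i
    have hxi : max (-z i) 0 = 0 := congrFun hx0 i
    have := le_max_left (-z i) 0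
    rw [hxi] at this
    linarith
  intro i
  rcases (hznn i).lt_or_eq with h | h
  · exact h
  · exfalso
    have h1 := hz i
    rw [← h, mul_zero] at h1
    have h2 : 0 ≤ ∑ j ∈ univ.erase i, S i j * z j :=
      Finset.sum_nonneg fun j _ => mul_nonneg (hS i j) (hznn j)
    linarith

theorem stmt9 {n k : ℕ} (hk : 1 ≤ k) (A : Fin n → (Fin k → Fin n) → ℂ)
    (γ : ℝ) (hγ : γ ∈ Set.Icc (0:ℝ) 1)
    (hDD : ∀ i : Fin n, tP A i ^ γ * tQ A i ^ (1 - γ) < tDiag A i - tS A i i) :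
    IsHTensor A := by
  obtain ⟨hγ0, hγ1⟩ := hγ
  have hk0 : (k:ℝ) ≠ 0 := Nat.cast_ne_zero.mpr (by omega)
  have hSnn : ∀ i j, 0 ≤ tS A i j := by
    intro i j
    apply mul_nonneg (by positivity)
    exact Finset.sum_nonneg fun t _ =>
      Finset.sum_nonneg fun α _ => norm_nonneg _
  have hdom : ∀ i, rowP (tS A) i ^ γ * colQ (tS A) i ^ (1-γ) <
      tDiag A i - tS A i i := fun i => hDD i
  obtain ⟨z, hz0, hz⟩ := coreMain (fun i => tDiag A i - tS A i i) (tS A) hSnn γ hγ0 hγ1 hdom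
  set y : Fin n → ℝ := fun i => z i ^ ((k:ℝ)⁻¹) with hy
  refine ⟨y, fun i => Real.rpow_pos_of_pos (hz0 i) _, fun i => ?_⟩
  have hyk : ∀ i, y i ^ k = z i := by
    intro i
    show (z i ^ ((k:ℝ)⁻¹)) ^ (k:ℕ) = z i
    rw [← Real.rpow_natCast (z i ^ ((k:ℝ)⁻¹)) k, ← Real.rpow_mul (hz0 i).le,
      inv_mul_cancel₀ hk0, Real.rpow_one]
  set F := univ.filter (fun α : Fin k → Fin n => α ≠ fun _ => i) with hF
  have step1 : ∀ α : Fin k → Fin n, ∏ t, y (α t) ≤ (1/(k:ℝ)) * ∑ t, z (α t) := by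
    intro α
    have h := Real.geom_mean_le_arith_mean_weighted univ (fun _ : Fin k => (k:ℝ)⁻¹)
      (fun t => z (α t)) (fun t _ => by positivity)
      (by
        rw [Finset.sum_const]
        simp only [Finset.card_univ, Fintype.card_fin, nsmul_eq_mul]
        exact mul_inv_cancel₀ hk0)
      (fun t _ => (hz0 _).le)
    calc ∏ t, y (α t) = ∏ t, z (α t) ^ ((k:ℝ)⁻¹) := rfl
      _ ≤ ∑ t, (k:ℝ)⁻¹ * z (α t) := h
      _ = (1/(k:ℝ)) * ∑ t, z (α t) := by rw [Finset.mul_sum, one_div]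
  have step2 : ∑ α ∈ F, ‖A i α‖ * ∏ t, y (α t) ≤
      ∑ α ∈ F, ‖A i α‖ * ((1/(k:ℝ)) * ∑ t, z (α t)) :=
    Finset.sum_le_sum fun α _ =>
      mul_le_mul_of_nonneg_left (step1 α) (norm_nonneg _)
  have fib : ∀ t : Fin k,
      (∑ j, (∑ α ∈ univ.filter (fun α : Fin k → Fin n => α t = j ∧ α ≠ fun _ => i),
        ‖A i α‖) * z j) = ∑ α ∈ F, ‖A i α‖ * z (α t) := by
    intro t
    have h1 : ∀ j, univ.filter (fun α : Fin k → Fin n => α t = j ∧ α ≠ fun _ => i) =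
        F.filter (fun α => α t = j) := by
      intro j
      rw [hF, Finset.filter_filter]
      exact Finset.filter_congr fun α _ => by constructor <;> exact fun h => ⟨h.2, h.1⟩
    calc (∑ j, (∑ α ∈ univ.filter (fun α : Fin k → Fin n => α t = j ∧ α ≠ fun _ => i),
          ‖A i α‖) * z j)
        = ∑ j, ∑ α ∈ F.filter (fun α => α t = j), ‖A i α‖ * z (α t) := by
          refine Finset.sum_congr rfl fun j _ => ?_
          rw [h1 j, Finset.sum_mul]
          exact Finset.sum_congr rfl fun α hα => by
            rw [(Finset.mem_filter.mp hα).2]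
      _ = ∑ α ∈ F, ‖A i α‖ * z (α t) :=
          Finset.sum_fiberwise_of_maps_to (fun α _ => mem_univ (α t)) _
  have key : ∑ α ∈ F, ‖A i α‖ * ((1/(k:ℝ)) * ∑ t, z (α t)) =
      ∑ j, tS A i j * z j := by
    have hts : ∀ j, tS A i j * z j =
        ∑ t : Fin k, (1/(k:ℝ)) * ((∑ α ∈ univ.filter
          (fun α : Fin k → Fin n => α t = j ∧ α ≠ fun _ => i),
          ‖A i α‖) * z j) := by
      intro j
      rw [tS, Finset.mul_sum, Finset.sum_mul]
      exact Finset.sum_congr rfl fun t _ => by ring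
    calc ∑ α ∈ F, ‖A i α‖ * ((1/(k:ℝ)) * ∑ t, z (α t))
        = ∑ α ∈ F, (1/(k:ℝ)) * ∑ t, ‖A i α‖ * z (α t) := by
          refine Finset.sum_congr rfl fun α _ => ?_
          rw [Finset.mul_sum, Finset.mul_sum, Finset.mul_sum]
          exact Finset.sum_congr rfl fun t _ => by ring
      _ = ∑ α ∈ F, ∑ t, (1/(k:ℝ)) * (‖A i α‖ * z (α t)) := by
          exact Finset.sum_congr rfl fun α _ => Finset.mul_sum _ _ _
      _ = ∑ t : Fin k, ∑ α ∈ F, (1/(k:ℝ)) * (‖A i α‖ * z (α t)) :=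
          Finset.sum_comm
      _ = ∑ t : Fin k, (1/(k:ℝ)) * ∑ α ∈ F, ‖A i α‖ * z (α t) := by
          exact Finset.sum_congr rfl fun t _ => (Finset.mul_sum _ _ _).symm
      _ = ∑ t : Fin k, (1/(k:ℝ)) * ∑ j, (∑ α ∈ univ.filter
            (fun α : Fin k → Fin n => α t = j ∧ α ≠ fun _ => i),
            ‖A i α‖) * z j := by
          exact Finset.sum_congr rfl fun t _ => by rw [fib t]
      _ = ∑ t : Fin k, ∑ j, (1/(k:ℝ)) * ((∑ α ∈ univ.filter
            (fun α : Fin k → Fin n => α t = j ∧ α ≠ fun _ => i),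
            ‖A i α‖) * z j) := by
          exact Finset.sum_congr rfl fun t _ => Finset.mul_sum _ _ _
      _ = ∑ j, ∑ t : Fin k, (1/(k:ℝ)) * ((∑ α ∈ univ.filter
            (fun α : Fin k → Fin n => α t = j ∧ α ≠ fun _ => i),
            ‖A i α‖) * z j) := Finset.sum_comm
      _ = ∑ j, tS A i j * z j := Finset.sum_congr rfl fun j _ => (hts j).symm
  have step4 : ∑ j, tS A i j * z j < tDiag A i * z i := by
    have hsplit : ∑ j, tS A i j * z j =
        tS A i i * z i + ∑ j ∈ univ.erase i, tS A i j * z j :=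
      (Finset.add_sum_erase univ _ (mem_univ i)).symm
    have := hz i
    rw [hsplit]
    nlinarith [this]
  rw [hyk i]
  calc ∑ α ∈ F, ‖A i α‖ * ∏ t, y (α t)
      ≤ ∑ α ∈ F, ‖A i α‖ * ((1/(k:ℝ)) * ∑ t, z (α t)) := step2
    _ = ∑ j, tS A i j * z j := key
    _ < tDiag A i * z i := step4
end

section
/- Let $\gamma \in [0,1]$. Every $H$-eigenvalue $\lambda$ of $\mathcal{A} \in \mathbb{C}^{[m\times n]}$ lies in $\bigcup_{i} \mathcal{O}_i(\mathcal{A})$, where $\mathcal{O}_i(\mathcal{A}) = \{z : |z - a_{i\cdots i}| - s_{ii}(\mathcal{A}) \le (P_i(A))^{\gamma} (Q_i(A))^{1-\gamma}\}$ with $P_i(A) = \sum_{j\ne i} s_{ij}(\mathcal{A})$, $Q_i(A) = \sum_{j\ne i} s_{ji}(\mathcal{A})$ (modified Ostrowski set for tensor $H$-eigenvalues). -/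
open Finset

private lemma amgm2 {p q γ : ℝ} (hp : 0 ≤ p) (hq : 0 ≤ q) (h0 : 0 ≤ γ) (h1 : γ ≤ 1) :
    p ^ γ * q ^ (1 - γ) ≤ γ * p + (1 - γ) * q := by
  have h := Real.geom_mean_le_arith_mean_weighted Finset.univ
    (fun b : Bool => if b then γ else 1 - γ) (fun b : Bool => if b then p else q)
    (by intro b _; cases b <;> simp <;> linarith)
    (by rw [Fintype.sum_bool]; simp)
    (by intro b _; cases b <;> simp [hp, hq])
  rw [Fintype.prod_bool, Fintype.sum_bool] at h
  simpa using h

private lemma holder2 {ι : Type*} (s : Finset ι) (a b : ι → ℝ)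
    (ha : ∀ j ∈ s, 0 ≤ a j) (hb : ∀ j ∈ s, 0 ≤ b j) {γ : ℝ} (h0 : 0 ≤ γ) (h1 : γ ≤ 1) :
    ∑ j ∈ s, a j ^ γ * b j ^ (1 - γ) ≤ (∑ j ∈ s, a j) ^ γ * (∑ j ∈ s, b j) ^ (1 - γ) := by
  rcases eq_or_lt_of_le h0 with h0' | h0'
  · simp [← h0']
  rcases eq_or_lt_of_le h1 with h1' | h1'
  · simp [h1']
  have hε : 0 < 1 - γ := by linarith
  have hA : 0 ≤ ∑ j ∈ s, a j := Finset.sum_nonneg ha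
  have hB : 0 ≤ ∑ j ∈ s, b j := Finset.sum_nonneg hb
  rcases eq_or_lt_of_le hA with hA0 | hA0
  · have hz : ∀ j ∈ s, a j = 0 := (Finset.sum_eq_zero_iff_of_nonneg ha).1 hA0.symm
    have hL : ∑ j ∈ s, a j ^ γ * b j ^ (1 - γ) = 0 :=
      Finset.sum_eq_zero fun j hj => by
        rw [hz j hj, Real.zero_rpow (ne_of_gt h0'), zero_mul]
    rw [hL]
    exact mul_nonneg (Real.rpow_nonneg hA _) (Real.rpow_nonneg hB _)
  rcases eq_or_lt_of_le hB with hB0 | hB0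
  · have hz : ∀ j ∈ s, b j = 0 := (Finset.sum_eq_zero_iff_of_nonneg hb).1 hB0.symm
    have hL : ∑ j ∈ s, a j ^ γ * b j ^ (1 - γ) = 0 :=
      Finset.sum_eq_zero fun j hj => by
        rw [hz j hj, Real.zero_rpow (ne_of_gt hε), mul_zero]
    rw [hL]
    exact mul_nonneg (Real.rpow_nonneg hA _) (Real.rpow_nonneg hB _)
  have hSA : (∑ j ∈ s, a j) ^ γ ≠ 0 := (Real.rpow_pos_of_pos hA0 _).ne'
  have hSB : (∑ j ∈ s, b j) ^ (1 - γ) ≠ 0 := (Real.rpow_pos_of_pos hB0 _).ne'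
  have hsum1 : ∑ j ∈ s, (γ * (a j / (∑ j ∈ s, a j)) + (1 - γ) * (b j / (∑ j ∈ s, b j))) = 1 := by
    rw [Finset.sum_add_distrib, ← Finset.mul_sum, ← Finset.mul_sum, ← Finset.sum_div,
      ← Finset.sum_div, div_self hA0.ne', div_self hB0.ne']
    ring
  calc ∑ j ∈ s, a j ^ γ * b j ^ (1 - γ)
      ≤ ∑ j ∈ s, (∑ j ∈ s, a j) ^ γ * (∑ j ∈ s, b j) ^ (1 - γ) *
          (γ * (a j / (∑ j ∈ s, a j)) + (1 - γ) * (b j / (∑ j ∈ s, b j))) := by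
        refine Finset.sum_le_sum fun j hj => ?_
        have h2 : a j ^ γ * b j ^ (1 - γ)
            = (∑ j ∈ s, a j) ^ γ * (∑ j ∈ s, b j) ^ (1 - γ) *
              ((a j / (∑ j ∈ s, a j)) ^ γ * (b j / (∑ j ∈ s, b j)) ^ (1 - γ)) := by
          rw [Real.div_rpow (ha j hj) hA, Real.div_rpow (hb j hj) hB]
          field_simp
        rw [h2]
        refine mul_le_mul_of_nonneg_left
          (amgm2 (div_nonneg (ha j hj) hA) (div_nonneg (hb j hj) hB) h0 h1) ?_
        exact mul_nonneg (Real.rpow_nonneg hA _) (Real.rpow_nonneg hB _)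
    _ = (∑ j ∈ s, a j) ^ γ * (∑ j ∈ s, b j) ^ (1 - γ) := by
        rw [← Finset.mul_sum, hsum1, mul_one]

private lemma ostrowski {n : ℕ} (S : Fin n → Fin n → ℝ) (hS : ∀ i j, 0 ≤ S i j)
    (d u : Fin n → ℝ) (hu : ∀ i, 0 ≤ u i) {i₀ : Fin n} (hi₀ : 0 < u i₀)
    (hbase : ∀ i, d i * u i ≤ ∑ j ∈ univ.erase i, S i j * u j)
    {γ : ℝ} (hγ0 : 0 ≤ γ) (hγ1 : γ ≤ 1) :
    ∃ i, d i ≤ (∑ j ∈ univ.erase i, S i j) ^ γ * (∑ j ∈ univ.erase i, S j i) ^ (1 - γ) := by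
  by_contra hcon
  push_neg at hcon
  set P : Fin n → ℝ := fun i => ∑ j ∈ univ.erase i, S i j with hP
  set Q : Fin n → ℝ := fun i => ∑ j ∈ univ.erase i, S j i with hQ
  have hP0 : ∀ i, 0 ≤ P i := fun i => Finset.sum_nonneg fun j _ => hS i j
  have hQ0 : ∀ i, 0 ≤ Q i := fun i => Finset.sum_nonneg fun j _ => hS j i
  have hd0 : ∀ i, 0 < d i := fun i =>
    lt_of_le_of_lt (mul_nonneg (Real.rpow_nonneg (hP0 i) _) (Real.rpow_nonneg (hQ0 i) _))
      (hcon i)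
  rcases eq_or_lt_of_le hγ1 with hγ1' | hγ1'
  · -- γ = 1
    subst hγ1'
    obtain ⟨i, -, hmax⟩ := Finset.exists_max_image univ u ⟨i₀, Finset.mem_univ _⟩
    have hui : 0 < u i := lt_of_lt_of_le hi₀ (hmax i₀ (Finset.mem_univ _))
    have h1 : d i * u i ≤ P i * u i := by
      refine le_trans (hbase i) ?_
      rw [hP, Finset.sum_mul]
      exact Finset.sum_le_sum fun j _ =>
        mul_le_mul_of_nonneg_left (hmax j (Finset.mem_univ _)) (hS i j)
    have h2 : d i ≤ P i := le_of_mul_le_mul_right h1 hui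
    have h3 := hcon i
    rw [Real.rpow_one, sub_self, Real.rpow_zero, mul_one] at h3
    linarith
  · have hε : 0 < 1 - γ := by linarith
    set v : Fin n → ℝ := fun j => u j ^ ((1 - γ)⁻¹) with hv
    have hv0 : ∀ j, 0 ≤ v j := fun j => Real.rpow_nonneg (hu j) _
    have hvu : ∀ j, v j ^ (1 - γ) = u j := by
      intro j
      show (u j ^ (1 - γ)⁻¹) ^ (1 - γ) = u j
      rw [← Real.rpow_mul (hu j), inv_mul_cancel₀ (ne_of_gt hε), Real.rpow_one]
    set W : Fin n → ℝ := fun i => ∑ j ∈ univ.erase i, S i j * v j with hW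
    have hW0 : ∀ i, 0 ≤ W i := fun i => Finset.sum_nonneg fun j _ => mul_nonneg (hS _ _) (hv0 j)
    have key : ∀ i, 0 < u i → Q i * v i < W i := by
      intro i hui
      have hPpos : 0 < P i := by
        rcases eq_or_lt_of_le (hP0 i) with hPz | hPz
        · exfalso
          have hz : ∀ j ∈ univ.erase i, S i j = 0 :=
            (Finset.sum_eq_zero_iff_of_nonneg (fun j _ => hS i j)).1 hPz.symm
          have h0' : ∑ j ∈ univ.erase i, S i j * u j = 0 :=
            Finset.sum_eq_zero fun j hj => by rw [hz j hj, zero_mul]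
          have hb := hbase i
          rw [h0'] at hb
          nlinarith [hd0 i]
        · exact hPz
      have hH : ∑ j ∈ univ.erase i, S i j * u j ≤ P i ^ γ * W i ^ (1 - γ) := by
        have heq : ∀ j ∈ univ.erase i, S i j * u j
            = S i j ^ γ * (S i j * v j) ^ (1 - γ) := by
          intro j _
          rw [Real.mul_rpow (hS i j) (hv0 j), hvu j, ← mul_assoc,
            ← Real.rpow_add' (hS i j) (by norm_num : γ + (1 - γ) ≠ 0)]
          have h1 : γ + (1 - γ) = 1 := by ring
          rw [h1, Real.rpow_one]
        calc ∑ j ∈ univ.erase i, S i j * u j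
            = ∑ j ∈ univ.erase i, S i j ^ γ * (S i j * v j) ^ (1 - γ) :=
              Finset.sum_congr rfl heq
          _ ≤ (∑ j ∈ univ.erase i, S i j) ^ γ * (∑ j ∈ univ.erase i, S i j * v j) ^ (1 - γ) :=
              holder2 _ _ _ (fun j _ => hS i j) (fun j _ => mul_nonneg (hS i j) (hv0 j)) hγ0 hγ1
          _ = P i ^ γ * W i ^ (1 - γ) := rfl
      have h3 : P i ^ γ * (Q i ^ (1 - γ) * u i) < P i ^ γ * W i ^ (1 - γ) := by
        calc P i ^ γ * (Q i ^ (1 - γ) * u i) = (P i ^ γ * Q i ^ (1 - γ)) * u i := by ring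
          _ < d i * u i := mul_lt_mul_of_pos_right (hcon i) hui
          _ ≤ ∑ j ∈ univ.erase i, S i j * u j := hbase i
          _ ≤ P i ^ γ * W i ^ (1 - γ) := hH
      have h4 : Q i ^ (1 - γ) * u i < W i ^ (1 - γ) :=
        lt_of_mul_lt_mul_left h3 (le_of_lt (Real.rpow_pos_of_pos hPpos γ))
      have h5 : (Q i * v i) ^ (1 - γ) < W i ^ (1 - γ) := by
        rw [Real.mul_rpow (hQ0 i) (hv0 i), hvu i]; exact h4
      by_contra hcc
      push_neg at hcc
      exact absurd (Real.rpow_le_rpow (hW0 i) hcc (le_of_lt hε)) (not_le.2 h5)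
    have key' : ∀ i, Q i * v i ≤ W i := by
      intro i
      rcases eq_or_lt_of_le (hu i) with h | h
      · have hvz : v i = 0 := by
          show u i ^ (1 - γ)⁻¹ = 0
          rw [← h, Real.zero_rpow (inv_ne_zero (ne_of_gt hε))]
        rw [hvz, mul_zero]
        exact hW0 i
      · exact le_of_lt (key i h)
    have hvi₀ : 0 < v i₀ := Real.rpow_pos_of_pos hi₀ _
    have hlt : ∑ i, Q i * v i < ∑ i, W i :=
      Finset.sum_lt_sum (fun i _ => key' i) ⟨i₀, Finset.mem_univ _, key i₀ hi₀⟩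
    have heq2 : ∑ i, W i = ∑ i, Q i * v i := by
      calc ∑ i, W i = ∑ i, (∑ j, S i j * v j - S i i * v i) :=
            Finset.sum_congr rfl fun i _ => Finset.sum_erase_eq_sub (Finset.mem_univ i)
        _ = ∑ i, ∑ j, S i j * v j - ∑ i, S i i * v i := by rw [Finset.sum_sub_distrib]
        _ = ∑ j, ∑ i, S i j * v j - ∑ i, S i i * v i := by rw [Finset.sum_comm]
        _ = ∑ j, (S j j + Q j) * v j - ∑ i, S i i * v i := by
            congr 1
            refine Finset.sum_congr rfl fun j _ => ?_
            rw [← Finset.sum_mul]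
            congr 1
            exact (Finset.add_sum_erase univ (fun i => S i j) (Finset.mem_univ j)).symm
        _ = ∑ j, Q j * v j := by
            simp only [add_mul, Finset.sum_add_distrib]
            ring
    rw [heq2] at hlt
    exact lt_irrefl _ hlt

theorem stmt13 {n k : ℕ} (hn : 2 ≤ n) (hk : 1 ≤ k) (A : Fin n → (Fin k → Fin n) → ℂ)
    (γ : ℝ) (hγ : γ ∈ Set.Icc (0:ℝ) 1) (lam : ℝ) (hlam : IsHEig A lam) :
    ∃ i : Fin n,
      ‖(lam : ℂ) - A i (fun _ => i)‖ - tS A i i ≤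
        tP A i ^ γ * tQ A i ^ (1 - γ) := by
  obtain ⟨hγ0, hγ1⟩ := hγ
  obtain ⟨x, hx0, hx⟩ := hlam
  have hk0 : (k : ℝ) ≠ 0 := Nat.cast_ne_zero.2 (by omega)
  set u : Fin n → ℝ := fun j => |x j| ^ k with hu_def
  have hu0 : ∀ j, 0 ≤ u j := fun j => pow_nonneg (abs_nonneg _) _
  have hS0 : ∀ i j, 0 ≤ tS A i j := by
    intro i j
    refine mul_nonneg (by positivity) ?_
    exact Finset.sum_nonneg fun t _ => Finset.sum_nonneg fun α _ => norm_nonneg _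
  obtain ⟨i₀, hxi₀⟩ := Function.ne_iff.1 hx0
  have hui₀ : 0 < u i₀ := pow_pos (abs_pos.2 (by simpa using hxi₀)) k
  have base : ∀ i, ‖(lam:ℂ) - A i (fun _ => i)‖ * u i ≤ ∑ j, tS A i j * u j := by
    intro i
    have hsplit : (∑ α : Fin k → Fin n, A i α * ∏ t, (x (α t):ℂ))
        = A i (fun _ => i) * (x i:ℂ) ^ k
          + ∑ α ∈ univ.filter (fun α : Fin k → Fin n => α ≠ fun _ => i),
              A i α * ∏ t, (x (α t):ℂ) := by
      rw [← Finset.sum_filter_add_sum_filter_not univ (fun α : Fin k → Fin n => α = fun _ => i)]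
      congr 1
      rw [Finset.filter_eq']
      simp [Finset.prod_const, Finset.card_univ]
    have hkey : ((lam:ℂ) - A i (fun _ => i)) * (x i:ℂ) ^ k
        = ∑ α ∈ univ.filter (fun α : Fin k → Fin n => α ≠ fun _ => i),
            A i α * ∏ t, (x (α t):ℂ) := by
      have h := hx i
      rw [hsplit] at h
      linear_combination -h
    have habs : ‖(lam:ℂ) - A i (fun _ => i)‖ * u i
        ≤ ∑ α ∈ univ.filter (fun α : Fin k → Fin n => α ≠ fun _ => i),
            ‖A i α‖ * ∏ t, |x (α t)| := by
      have h1 : ‖((lam:ℂ) - A i (fun _ => i)) * (x i:ℂ) ^ k‖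
          = ‖(lam:ℂ) - A i (fun _ => i)‖ * u i := by
        rw [norm_mul, norm_pow, Complex.norm_real, Real.norm_eq_abs]
      rw [← h1, hkey]
      refine le_trans (norm_sum_le _ _) (le_of_eq ?_)
      refine Finset.sum_congr rfl fun α _ => ?_
      rw [norm_mul, norm_prod]
      simp
    have hamgm : ∀ α : Fin k → Fin n, (∏ t, |x (α t)|) ≤ ∑ t, (1/(k:ℝ)) * u (α t) := by
      intro α
      have h := Real.geom_mean_le_arith_mean_weighted univ (fun _ : Fin k => 1/(k:ℝ))
        (fun t => u (α t)) (fun t _ => by positivity)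
        (by rw [Finset.sum_const, Finset.card_univ, Fintype.card_fin, nsmul_eq_mul]
            field_simp)
        (fun t _ => hu0 _)
      refine le_trans (le_of_eq ?_) h
      refine Finset.prod_congr rfl fun t _ => ?_
      show |x (α t)| = (|x (α t)| ^ k : ℝ) ^ ((1:ℝ)/(k:ℝ))
      rw [← Real.rpow_natCast |x (α t)| k, ← Real.rpow_mul (abs_nonneg _)]
      rw [mul_one_div, div_self hk0, Real.rpow_one]
    have hsum2 : ∑ α ∈ univ.filter (fun α : Fin k → Fin n => α ≠ fun _ => i),
          ‖A i α‖ * (∑ t, (1/(k:ℝ)) * u (α t))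
        = ∑ j, tS A i j * u j := by
      have lhs_eq : ∑ α ∈ univ.filter (fun α : Fin k → Fin n => α ≠ fun _ => i),
            ‖A i α‖ * (∑ t, (1/(k:ℝ)) * u (α t))
          = ∑ t, ∑ α ∈ univ.filter (fun α : Fin k → Fin n => α ≠ fun _ => i),
              (1/(k:ℝ)) * (‖A i α‖ * u (α t)) := by
        rw [Finset.sum_comm]
        refine Finset.sum_congr rfl fun α _ => ?_
        rw [Finset.mul_sum]
        exact Finset.sum_congr rfl fun t _ => by ring
      have hfilter : ∀ (t : Fin k) (j : Fin n),
          univ.filter (fun α : Fin k → Fin n => α t = j ∧ α ≠ fun _ => i)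
          = (univ.filter (fun α : Fin k → Fin n => α ≠ fun _ => i)).filter
              (fun α => α t = j) := by
        intro t j
        rw [Finset.filter_filter]
        exact Finset.filter_congr fun α _ => by tauto
      have rhs_eq : ∑ j, tS A i j * u j
          = ∑ t, ∑ α ∈ univ.filter (fun α : Fin k → Fin n => α ≠ fun _ => i),
              (1/(k:ℝ)) * (‖A i α‖ * u (α t)) := by
        calc ∑ j, tS A i j * u j
            = ∑ j, ∑ t, ∑ α ∈ (univ.filter (fun α : Fin k → Fin n => α ≠ fun _ => i)).filter
                (fun α => α t = j), (1/(k:ℝ)) * (‖A i α‖ * u (α t)) := by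
              refine Finset.sum_congr rfl fun j _ => ?_
              rw [tS, Finset.mul_sum, Finset.sum_mul]
              refine Finset.sum_congr rfl fun t _ => ?_
              rw [hfilter t j, Finset.mul_sum, Finset.sum_mul]
              refine Finset.sum_congr rfl fun α hα => ?_
              have hj : α t = j := (Finset.mem_filter.1 hα).2
              rw [← hj]
              ring
          _ = ∑ t, ∑ j, ∑ α ∈ (univ.filter (fun α : Fin k → Fin n => α ≠ fun _ => i)).filter
                (fun α => α t = j), (1/(k:ℝ)) * (‖A i α‖ * u (α t)) :=
              Finset.sum_comm
          _ = ∑ t, ∑ α ∈ univ.filter (fun α : Fin k → Fin n => α ≠ fun _ => i),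
              (1/(k:ℝ)) * (‖A i α‖ * u (α t)) :=
              Finset.sum_congr rfl fun t _ => Finset.sum_fiberwise _ _ _
      rw [lhs_eq, rhs_eq]
    calc ‖(lam:ℂ) - A i (fun _ => i)‖ * u i
        ≤ ∑ α ∈ univ.filter (fun α : Fin k → Fin n => α ≠ fun _ => i),
            ‖A i α‖ * ∏ t, |x (α t)| := habs
      _ ≤ ∑ α ∈ univ.filter (fun α : Fin k → Fin n => α ≠ fun _ => i),
            ‖A i α‖ * (∑ t, (1/(k:ℝ)) * u (α t)) :=
          Finset.sum_le_sum fun α _ =>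
            mul_le_mul_of_nonneg_left (hamgm α) (norm_nonneg _)
      _ = ∑ j, tS A i j * u j := hsum2
  have base' : ∀ i, (‖(lam:ℂ) - A i (fun _ => i)‖ - tS A i i) * u i
      ≤ ∑ j ∈ univ.erase i, tS A i j * u j := by
    intro i
    have h := base i
    rw [← Finset.add_sum_erase _ _ (Finset.mem_univ i)] at h
    rw [sub_mul]
    linarith
  obtain ⟨i, hi⟩ := ostrowski (tS A) hS0
    (fun i => ‖(lam:ℂ) - A i (fun _ => i)‖ - tS A i i) u hu0 hui₀ base' hγ0 hγ1
  exact ⟨i, by simpa [tP, tQ] using hi⟩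
end

section
/- Let $\gamma \in [0,1]$. Every $H$-eigenvalue $\lambda$ of $\mathcal{A} \in \mathbb{C}^{[m\times n]}$ lies in $\bigcup_i \mathcal{W}_i(\mathcal{A})$, where $\mathcal{W}_i(\mathcal{A}) = \{z : |z - a_{i\cdots i}| - s_{ii}(\mathcal{A}) \le \gamma P_i(A) + (1-\gamma) Q_i(A)\}$ ($\gamma$-diagonal-dominance inclusion set). -/
open Finset

lemma holder_step {n : ℕ} (γ δ : ℝ) (hγ : 0 ≤ γ) (hδ : 0 < δ) (hsum : γ + δ = 1)
    (s : Fin n → ℝ) (hs : ∀ j, 0 ≤ s j) (y ξ : Fin n → ℝ) (hy : ∀ j, 0 ≤ y j)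
    (hξ : ∀ j, ξ j = y j ^ (1/δ)) (T : Finset (Fin n))
    (hP : 0 < ∑ j ∈ T, s j) (hS : 0 < ∑ j ∈ T, s j * ξ j) :
    ∑ j ∈ T, s j * y j ≤ (∑ j ∈ T, s j) ^ γ * (∑ j ∈ T, s j * ξ j) ^ δ := by
  set P := ∑ j ∈ T, s j with hPdef
  set S := ∑ j ∈ T, s j * ξ j with hSdef
  have hξn : ∀ j, 0 ≤ ξ j := fun j => (hξ j) ▸ Real.rpow_nonneg (hy j) _
  have hM : 0 < P ^ γ * S ^ δ := mul_pos (Real.rpow_pos_of_pos hP _) (Real.rpow_pos_of_pos hS _)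
  have key : ∀ j ∈ T, s j * y j ≤ (P ^ γ * S ^ δ) * (γ * (s j / P) + δ * (s j * ξ j / S)) := by
    intro j _
    have h1 := Real.geom_mean_le_arith_mean2_weighted hγ hδ.le
      (div_nonneg (hs j) hP.le) (div_nonneg (mul_nonneg (hs j) (hξn j)) hS.le) hsum
    have h2 : (P ^ γ * S ^ δ) * ((s j / P) ^ γ * (s j * ξ j / S) ^ δ) = s j * y j := by
      have e1 : P ^ γ * (s j / P) ^ γ = (s j) ^ γ := by
        rw [← Real.mul_rpow hP.le (div_nonneg (hs j) hP.le), mul_div_cancel₀ _ hP.ne']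
      have e2 : S ^ δ * (s j * ξ j / S) ^ δ = (s j * ξ j) ^ δ := by
        rw [← Real.mul_rpow hS.le (div_nonneg (mul_nonneg (hs j) (hξn j)) hS.le),
          mul_div_cancel₀ _ hS.ne']
      have e3 : (s j) ^ γ * (s j * ξ j) ^ δ = s j * y j := by
        have e4 : (y j ^ ((1:ℝ)/δ)) ^ δ = y j := by
          rw [← Real.rpow_mul (hy j), one_div, inv_mul_cancel₀ hδ.ne', Real.rpow_one]
        have e5 : s j ^ γ * s j ^ δ = s j := by
          rw [← Real.rpow_add' (hs j) (by rw [hsum]; norm_num), hsum, Real.rpow_one]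
        rw [Real.mul_rpow (hs j) (hξn j), hξ j, e4, ← mul_assoc, e5]
      calc (P ^ γ * S ^ δ) * ((s j / P) ^ γ * (s j * ξ j / S) ^ δ)
          = (P ^ γ * (s j / P) ^ γ) * (S ^ δ * (s j * ξ j / S) ^ δ) := by ring
        _ = s j * y j := by rw [e1, e2, e3]
    calc s j * y j = (P ^ γ * S ^ δ) * ((s j / P) ^ γ * (s j * ξ j / S) ^ δ) := h2.symm
      _ ≤ (P ^ γ * S ^ δ) * (γ * (s j / P) + δ * (s j * ξ j / S)) :=
          mul_le_mul_of_nonneg_left h1 hM.le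
  calc ∑ j ∈ T, s j * y j
      ≤ ∑ j ∈ T, (P ^ γ * S ^ δ) * (γ * (s j / P) + δ * (s j * ξ j / S)) :=
        Finset.sum_le_sum key
    _ = (P ^ γ * S ^ δ) * (γ * (P / P) + δ * (S / S)) := by
        rw [← Finset.mul_sum]; congr 1
        rw [Finset.sum_add_distrib]
        congr 1
        · rw [← Finset.mul_sum, ← Finset.sum_div]
        · rw [← Finset.mul_sum, ← Finset.sum_div]
    _ = P ^ γ * S ^ δ := by
        rw [div_self hP.ne', div_self hS.ne']; rw [mul_one, mul_one, hsum, mul_one]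

lemma keyMatrix {n : ℕ} (s : Fin n → Fin n → ℝ) (hs : ∀ i j, 0 ≤ s i j)
    (y : Fin n → ℝ) (hy : ∀ i, 0 ≤ y i) (i₀ : Fin n) (hy0 : 0 < y i₀)
    (c : Fin n → ℝ) (hc : ∀ i, c i * y i ≤ ∑ j ∈ univ.erase i, s i j * y j)
    (γ : ℝ) (h0 : 0 ≤ γ) (h1 : γ ≤ 1) :
    ∃ i, c i ≤ γ * (∑ j ∈ univ.erase i, s i j) + (1-γ) * (∑ j ∈ univ.erase i, s j i) := by
  by_contra hcon
  push_neg at hcon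
  set P := fun i => ∑ j ∈ univ.erase i, s i j with hPdef
  set Q := fun i => ∑ j ∈ univ.erase i, s j i with hQdef
  have hPn : ∀ i, 0 ≤ P i := fun i => Finset.sum_nonneg fun j _ => hs i j
  have hQn : ∀ i, 0 ≤ Q i := fun i => Finset.sum_nonneg fun j _ => hs j i
  have hcpos : ∀ i, 0 < c i := fun i =>
    lt_of_le_of_lt (by have := hPn i; have := hQn i; nlinarith) (hcon i)
  rcases eq_or_lt_of_le h1 with hγ1 | hγ1
  · -- γ = 1 : maximum argument
    obtain ⟨m, _, hm⟩ := Finset.exists_max_image (univ : Finset (Fin n)) y ⟨i₀, mem_univ i₀⟩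
    have hym : 0 < y m := lt_of_lt_of_le hy0 (hm i₀ (mem_univ i₀))
    have h2 : c m * y m ≤ P m * y m := by
      refine le_trans (hc m) ?_
      rw [hPdef]
      simp only
      rw [Finset.sum_mul]
      exact Finset.sum_le_sum fun j _ =>
        mul_le_mul_of_nonneg_left (hm j (mem_univ j)) (hs m j)
    have h3 : c m ≤ P m := le_of_mul_le_mul_right h2 hym
    have hcm := hcon m
    rw [hγ1] at hcm
    simp only [sub_self, zero_mul, one_mul, add_zero] at hcm
    linarith
  · -- γ < 1 : Hölder / scaling argument
    set δ := 1 - γ with hδdef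
    have hδ : 0 < δ := by linarith
    set ξ := fun j => y j ^ ((1:ℝ)/δ) with hξdef
    have hξn : ∀ j, 0 ≤ ξ j := fun j => Real.rpow_nonneg (hy j) _
    have hξ0 : ∀ j, y j = 0 → ξ j = 0 := fun j h => by
      simp only [hξdef, h]; exact Real.zero_rpow (by positivity)
    have hξpos : ∀ j, 0 < y j → 0 < ξ j := fun j h => Real.rpow_pos_of_pos h _
    have hyξ : ∀ j, y j = ξ j ^ δ := fun j => by
      rw [hξdef]; simp only
      rw [← Real.rpow_mul (hy j), one_div, inv_mul_cancel₀ hδ.ne', Real.rpow_one]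
    have main : ∀ i, 0 < y i → Q i * ξ i < ∑ j ∈ univ.erase i, s i j * ξ j := by
      intro i hyi
      have hSy : 0 < ∑ j ∈ univ.erase i, s i j * y j :=
        lt_of_lt_of_le (mul_pos (hcpos i) hyi) (hc i)
      have hP : 0 < P i := by
        rcases (hPn i).lt_or_eq with h | h
        · exact h
        · exfalso
          have hz : ∀ j ∈ univ.erase i, s i j = 0 :=
            (Finset.sum_eq_zero_iff_of_nonneg fun j _ => hs i j).mp h.symm
          have : ∑ j ∈ univ.erase i, s i j * y j = 0 :=
            Finset.sum_eq_zero fun j hj => by rw [hz j hj, zero_mul]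
          linarith
      have hS : 0 < ∑ j ∈ univ.erase i, s i j * ξ j := by
        rcases (Finset.sum_nonneg fun j (_ : j ∈ univ.erase i) =>
            mul_nonneg (hs i j) (hξn j)).lt_or_eq with h | h
        · exact h
        · exfalso
          have hz : ∀ j ∈ univ.erase i, s i j * ξ j = 0 :=
            (Finset.sum_eq_zero_iff_of_nonneg fun j _ =>
              mul_nonneg (hs i j) (hξn j)).mp h.symm
          have : ∑ j ∈ univ.erase i, s i j * y j = 0 := by
            refine Finset.sum_eq_zero fun j hj => ?_
            rcases mul_eq_zero.mp (hz j hj) with h' | h'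
            · rw [h', zero_mul]
            · have : y j = 0 := by
                by_contra hyj
                exact absurd h' (ne_of_gt (hξpos j (lt_of_le_of_ne (hy j) (Ne.symm hyj))))
              rw [this, mul_zero]
          linarith
      have hH := holder_step γ δ h0 hδ (by ring) (s i) (hs i) y ξ hy (fun j => rfl)
        (univ.erase i) hP hS
      have hgm : P i ^ γ * Q i ^ δ ≤ γ * P i + δ * Q i :=
        Real.geom_mean_le_arith_mean2_weighted h0 hδ.le (hPn i) (hQn i) (by ring)
      have h4 : P i ^ γ * Q i ^ δ * y i < c i * y i :=
        mul_lt_mul_of_pos_right (lt_of_le_of_lt hgm (hcon i)) hyi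
      have h5 : P i ^ γ * Q i ^ δ * y i < P i ^ γ *
          (∑ j ∈ univ.erase i, s i j * ξ j) ^ δ :=
        lt_of_lt_of_le h4 (le_trans (hc i) hH)
      have h6 : Q i ^ δ * ξ i ^ δ < (∑ j ∈ univ.erase i, s i j * ξ j) ^ δ := by
        have := h5
        rw [hyξ i, mul_assoc] at this
        exact lt_of_mul_lt_mul_left this (Real.rpow_nonneg (hPn i) _)
      by_contra hcon2
      push_neg at hcon2
      have h7 : (∑ j ∈ univ.erase i, s i j * ξ j) ^ δ ≤ (Q i * ξ i) ^ δ :=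
        Real.rpow_le_rpow hS.le hcon2 hδ.le
      rw [Real.mul_rpow (hQn i) (hξn i)] at h7
      linarith
    have hle : ∀ i, Q i * ξ i ≤ ∑ j ∈ univ.erase i, s i j * ξ j := by
      intro i
      rcases (hy i).lt_or_eq with h | h
      · exact (main i h).le
      · rw [hξ0 i h.symm, mul_zero]
        exact Finset.sum_nonneg fun j _ => mul_nonneg (hs i j) (hξn j)
    have hsum_lt : ∑ i, Q i * ξ i < ∑ i, ∑ j ∈ univ.erase i, s i j * ξ j :=
      Finset.sum_lt_sum (fun i _ => hle i) ⟨i₀, mem_univ _, main i₀ hy0⟩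
    have hswap : ∑ i, ∑ j ∈ univ.erase i, s i j * ξ j = ∑ j, Q j * ξ j := by
      have h1' : ∀ i : Fin n, ∑ j ∈ univ.erase i, s i j * ξ j =
          ∑ j : Fin n, if j ≠ i then s i j * ξ j else 0 := fun i => by
        rw [← Finset.sum_filter, Finset.filter_ne']
      simp_rw [h1']
      rw [Finset.sum_comm]
      refine Finset.sum_congr rfl fun j _ => ?_
      rw [← Finset.sum_filter]
      have he : univ.filter (fun i => j ≠ i) = univ.erase j := by
        ext i; simp [ne_comm]
      rw [he, ← Finset.sum_mul]
    rw [hswap] at hsum_lt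
    exact lt_irrefl _ hsum_lt


lemma tensor_ineq {n k : ℕ} (hk : 1 ≤ k) (A : Fin n → (Fin k → Fin n) → ℂ)
    (lam : ℝ) (x : Fin n → ℝ)
    (hxe : ∀ i, (∑ α : Fin k → Fin n, A i α * ∏ t, (x (α t) : ℂ)) =
      (lam : ℂ) * (x i : ℂ) ^ k) (i : Fin n) :
    ‖(lam : ℂ) - A i (fun _ => i)‖ * |x i| ^ k ≤
      ∑ j : Fin n, tS A i j * |x j| ^ k := by
  have hk0 : (k : ℝ) ≠ 0 := Nat.cast_ne_zero.mpr (by omega)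
  set ci : Fin k → Fin n := fun _ => i with hci
  set F := univ.filter (fun α : Fin k → Fin n => α ≠ ci) with hF
  have hprodc : (∏ t : Fin k, (x (ci t) : ℂ)) = (x i : ℂ) ^ k := by
    simp [hci, Finset.prod_const]
  have hsplit : A i ci * (x i : ℂ) ^ k + ∑ α ∈ F, A i α * ∏ t, (x (α t) : ℂ)
      = (lam : ℂ) * (x i : ℂ) ^ k := by
    have h := Finset.add_sum_erase univ
      (fun α : Fin k → Fin n => A i α * ∏ t, (x (α t) : ℂ)) (mem_univ ci)
    rw [hprodc] at h
    rw [hF, Finset.filter_ne', h, hxe i]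
  have heq : ((lam : ℂ) - A i ci) * (x i : ℂ) ^ k
      = ∑ α ∈ F, A i α * ∏ t, (x (α t) : ℂ) := by
    rw [sub_mul, ← hsplit]; ring
  have habs : ‖(lam : ℂ) - A i ci‖ * |x i| ^ k
      ≤ ∑ α ∈ F, ‖A i α‖ * ∏ t, |x (α t)| := by
    have h1 : ‖((lam : ℂ) - A i ci) * (x i : ℂ) ^ k‖
        = ‖(lam : ℂ) - A i ci‖ * |x i| ^ k := by
      rw [norm_mul, norm_pow, Complex.norm_real, Real.norm_eq_abs]
    rw [← h1, heq]
    refine le_trans (norm_sum_le _ _) (le_of_eq ?_)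
    refine Finset.sum_congr rfl fun α _ => ?_
    rw [norm_mul, norm_prod]
    simp
  have amgm : ∀ α : Fin k → Fin n, (∏ t, |x (α t)|) ≤ ∑ t, (1/(k:ℝ)) * |x (α t)| ^ k := by
    intro α
    have h : (∏ t : Fin k, (|x (α t)| ^ k) ^ ((1:ℝ)/(k:ℝ)))
        ≤ ∑ t : Fin k, (1/(k:ℝ)) * |x (α t)| ^ k :=
      Real.geom_mean_le_arith_mean_weighted univ (fun _ : Fin k => 1/(k:ℝ))
        (fun t => |x (α t)| ^ k) (fun t _ => by positivity)
        (by simp only [Finset.sum_const, Finset.card_univ, Fintype.card_fin, nsmul_eq_mul]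
            field_simp)
        (fun t _ => by positivity)
    refine le_trans (le_of_eq ?_) h
    refine Finset.prod_congr rfl fun t _ => ?_
    rw [← Real.rpow_natCast |x (α t)| k, ← Real.rpow_mul (abs_nonneg _),
      mul_one_div, div_self hk0, Real.rpow_one]
  have step6 : ∀ t : Fin k, ∑ α ∈ F, ‖A i α‖ * |x (α t)| ^ k
      = ∑ j : Fin n, (∑ α ∈ univ.filter (fun α : Fin k → Fin n => α t = j ∧ α ≠ ci),
          ‖A i α‖) * |x j| ^ k := by
    intro t
    rw [← Finset.sum_fiberwise F (fun α => α t)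
      (fun α => ‖A i α‖ * |x (α t)| ^ k)]
    refine Finset.sum_congr rfl fun j _ => ?_
    rw [Finset.sum_mul]
    refine Finset.sum_congr ?_ fun α hα => ?_
    · rw [hF, Finset.filter_filter]
      ext α; simp [and_comm]
    · have hαt : α t = j := (Finset.mem_filter.mp hα).2.1
      rw [hαt]
  calc ‖(lam : ℂ) - A i ci‖ * |x i| ^ k
      ≤ ∑ α ∈ F, ‖A i α‖ * ∏ t, |x (α t)| := habs
    _ ≤ ∑ α ∈ F, ‖A i α‖ * ∑ t, (1/(k:ℝ)) * |x (α t)| ^ k :=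
        Finset.sum_le_sum fun α _ =>
          mul_le_mul_of_nonneg_left (amgm α) (norm_nonneg _)
    _ = ∑ α ∈ F, ∑ t : Fin k, (1/(k:ℝ)) * (‖A i α‖ * |x (α t)| ^ k) := by
        refine Finset.sum_congr rfl fun α _ => ?_
        rw [Finset.mul_sum]
        exact Finset.sum_congr rfl fun t _ => by ring
    _ = ∑ t : Fin k, ∑ α ∈ F, (1/(k:ℝ)) * (‖A i α‖ * |x (α t)| ^ k) :=
        Finset.sum_comm
    _ = ∑ t : Fin k, (1/(k:ℝ)) * ∑ j : Fin n,
          (∑ α ∈ univ.filter (fun α : Fin k → Fin n => α t = j ∧ α ≠ ci),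
            ‖A i α‖) * |x j| ^ k := by
        refine Finset.sum_congr rfl fun t _ => ?_
        rw [← Finset.mul_sum, step6 t]
    _ = ∑ t : Fin k, ∑ j : Fin n, (1/(k:ℝ)) *
          ((∑ α ∈ univ.filter (fun α : Fin k → Fin n => α t = j ∧ α ≠ ci),
            ‖A i α‖) * |x j| ^ k) :=
        Finset.sum_congr rfl fun t _ => Finset.mul_sum _ _ _
    _ = ∑ j : Fin n, ∑ t : Fin k, (1/(k:ℝ)) *
          ((∑ α ∈ univ.filter (fun α : Fin k → Fin n => α t = j ∧ α ≠ ci),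
            ‖A i α‖) * |x j| ^ k) := Finset.sum_comm
    _ = ∑ j : Fin n, tS A i j * |x j| ^ k := by
        refine Finset.sum_congr rfl fun j _ => ?_
        rw [tS, mul_assoc, Finset.sum_mul, Finset.mul_sum]

theorem stmt14 {n k : ℕ} (hn : 2 ≤ n) (hk : 1 ≤ k) (A : Fin n → (Fin k → Fin n) → ℂ)
    (γ : ℝ) (hγ : γ ∈ Set.Icc (0:ℝ) 1) (lam : ℝ) (hlam : IsHEig A lam) :
    ∃ i : Fin n,
      ‖(lam : ℂ) - A i (fun _ => i)‖ - tS A i i ≤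
        γ * tP A i + (1 - γ) * tQ A i := by
  obtain ⟨x, hx0, hxe⟩ := hlam
  obtain ⟨h0, h1⟩ := hγ
  obtain ⟨i₀, hi₀⟩ : ∃ i₀, x i₀ ≠ 0 := Function.ne_iff.mp hx0
  have hy0 : 0 < |x i₀| ^ k := pow_pos (abs_pos.mpr hi₀) k
  have hsn : ∀ i j, 0 ≤ tS A i j := by
    intro i j
    rw [tS]
    exact mul_nonneg (by positivity) (Finset.sum_nonneg fun t _ =>
      Finset.sum_nonneg fun α _ => norm_nonneg _)
  have hc : ∀ i, (‖(lam:ℂ) - A i (fun _ => i)‖ - tS A i i) * |x i| ^ k ≤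
      ∑ j ∈ univ.erase i, tS A i j * |x j| ^ k := by
    intro i
    have h := tensor_ineq hk A lam x hxe i
    have hsp : ∑ j : Fin n, tS A i j * |x j| ^ k
        = tS A i i * |x i| ^ k + ∑ j ∈ univ.erase i, tS A i j * |x j| ^ k :=
      (Finset.add_sum_erase _ _ (mem_univ i)).symm
    rw [hsp] at h
    rw [sub_mul]
    linarith
  obtain ⟨i, hi⟩ := keyMatrix (tS A) hsn (fun j => |x j| ^ k) (fun j => by positivity)
    i₀ hy0 _ hc γ h0 h1
  exact ⟨i, by rw [tP, tQ]; exact hi⟩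
end

section
/- A strictly $S$-diagonally dominant complex matrix is a nonsingular $H$-matrix: if $A \in \mathbb{C}^{n\times n}$, $\emptyset \ne S \subsetneq \{1,\dots,n\}$, satisfies $|a_{ii}| > r_i^S(A)$ for all $i \in S$ and $(|a_{ii}| - r_i^S(A))(|a_{jj}| - r_j^{\overline{S}}(A)) > r_i^{\overline{S}}(A)\, r_j^S(A)$ for all $i \in S$, $j \in \overline{S}$, then there exists a positive diagonal matrix $D$ such that $AD$ is strictly diagonally dominant. -/
open Finset

theorem stmt16 {n : ℕ} (A : Matrix (Fin n) (Fin n) ℂ)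
    (S : Finset (Fin n)) (hS : S.Nonempty) (hS' : S ≠ univ)
    (h1 : ∀ i ∈ S, ∑ j ∈ S.erase i, ‖A i j‖ < ‖A i i‖)
    (h2 : ∀ i ∈ S, ∀ j ∈ Sᶜ,
      (∑ l ∈ Sᶜ.erase i, ‖A i l‖) * (∑ l ∈ S.erase j, ‖A j l‖) <
        (‖A i i‖ - ∑ l ∈ S.erase i, ‖A i l‖) *
          (‖A j j‖ - ∑ l ∈ Sᶜ.erase j, ‖A j l‖)) :
    ∃ d : Fin n → ℝ, (∀ i, 0 < d i) ∧ ∀ i,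
      (∑ j ∈ univ.erase i, ‖A i j‖ * d j) < ‖A i i‖ * d i := by
  classical
  set c : Fin n → ℝ := fun i => ‖A i i‖ with hc
  set rS : Fin n → ℝ := fun i => ∑ l ∈ S.erase i, ‖A i l‖ with hrS
  set rC : Fin n → ℝ := fun i => ∑ l ∈ Sᶜ.erase i, ‖A i l‖ with hrC
  have hrSnn : ∀ i, 0 ≤ rS i := fun i =>
    Finset.sum_nonneg fun l _ => norm_nonneg _
  have hrCnn : ∀ i, 0 ≤ rC i := fun i =>
    Finset.sum_nonneg fun l _ => norm_nonneg _
  have hpos : ∀ i ∈ S, 0 < c i - rS i := fun i hi => sub_pos.2 (h1 i hi)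
  have hcomp : Sᶜ.Nonempty := by
    rw [Finset.nonempty_iff_ne_empty]
    intro h
    exact hS' (by simpa [Finset.compl_eq_empty_iff] using h)
  set f : Fin n → ℝ := fun i => rC i / (c i - rS i) with hf
  set α : ℝ := S.sup' hS f with hα
  have hfnn : ∀ i ∈ S, 0 ≤ f i := fun i hi => div_nonneg (hrCnn i) (le_of_lt (hpos i hi))
  have hα0 : 0 ≤ α := by
    obtain ⟨i0, hi0⟩ := hS
    exact le_trans (hfnn i0 hi0) (Finset.le_sup' f hi0)
  have hjpos : ∀ j ∈ Sᶜ, 0 < c j - rC j := by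
    intro j hj
    obtain ⟨i0, hi0⟩ := hS
    have h := h2 i0 hi0 j hj
    have h0 : 0 ≤ rC i0 * rS j := mul_nonneg (hrCnn i0) (hrSnn j)
    have hp := hpos i0 hi0
    nlinarith
  have key : ∀ j ∈ Sᶜ, α * rS j < c j - rC j := by
    intro j hj
    obtain ⟨i, hiS, hif⟩ := S.exists_mem_eq_sup' hS f
    rw [hα, hif]
    have h := h2 i hiS j hj
    have hp := hpos i hiS
    show rC i / (c i - rS i) * rS j < c j - rC j
    rw [div_mul_eq_mul_div, div_lt_iff₀ hp]
    nlinarith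
  set g : Fin n → ℝ := fun j => (c j - rC j - α * rS j) / (rS j + 1) with hg
  have hgpos : ∀ j ∈ Sᶜ, 0 < g j := by
    intro j hj
    apply div_pos (by have := key j hj; linarith) (by have := hrSnn j; linarith)
  set δ : ℝ := Sᶜ.inf' hcomp g with hδ
  have hδpos : 0 < δ := by
    rw [hδ, Finset.lt_inf'_iff]
    exact hgpos
  set γ : ℝ := α + δ with hγ
  have hγpos : 0 < γ := by positivity
  refine ⟨fun i => if i ∈ S then γ else 1, fun i => by by_cases h : i ∈ S <;> simp [h, hγpos], ?_⟩
  have hsplit : ∀ i, (∑ j ∈ univ.erase i,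
      ‖A i j‖ * (if j ∈ S then γ else 1)) = γ * rS i + rC i := by
    intro i
    have hU : univ.erase i = S.erase i ∪ Sᶜ.erase i := by
      ext j
      simp only [Finset.mem_erase, Finset.mem_union, Finset.mem_univ, Finset.mem_compl, and_true]
      tauto
    have hdisj : Disjoint (S.erase i) (Sᶜ.erase i) := by
      rw [Finset.disjoint_left]
      intro a ha ha'
      exact (Finset.mem_compl.1 (Finset.mem_erase.1 ha').2) (Finset.mem_erase.1 ha).2
    rw [hU, Finset.sum_union hdisj]
    congr 1
    · rw [hrS, Finset.mul_sum]
      apply Finset.sum_congr rfl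
      intro j hj
      have : j ∈ S := (Finset.mem_erase.1 hj).2
      simp [this]
      ring
    · apply Finset.sum_congr rfl
      intro j hj
      have : j ∉ S := Finset.mem_compl.1 (Finset.mem_erase.1 hj).2
      simp [this]
  intro i
  rw [hsplit]
  by_cases hi : i ∈ S
  · simp only [hi, if_true]
    have hfi : f i ≤ α := Finset.le_sup' f hi
    have hp := hpos i hi
    have hrci : rC i = f i * (c i - rS i) := by
      rw [hf]
      field_simp
    show γ * rS i + rC i < c i * γ
    nlinarith
  · simp only [hi, if_false]
    have hj : i ∈ Sᶜ := Finset.mem_compl.2 hi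
    have hδle : δ ≤ g i := Finset.inf'_le g hj
    have hgp := hgpos i hj
    have hgi : g i * (rS i + 1) = c i - rC i - α * rS i := by
      rw [hg]
      field_simp
      exact mul_div_cancel_right₀ _ (ne_of_gt (by linarith [hrSnn i]))
    have hrs := hrSnn i
    show γ * rS i + rC i < c i * 1
    nlinarith
end

section
/- If $\mathcal{A}$ is an $H$-tensor, then $0$ is not an $H$-eigenvalue of $\mathcal{A}$: there is no nonzero real vector $x$ with $\mathcal{A}x^{m-1} = 0$. -/
open Finset

theorem stmt17 {n k : ℕ} (hk : 1 ≤ k) (A : Fin n → (Fin k → Fin n) → ℂ)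
    (hH : IsHTensor A) :
    ¬ ∃ x : Fin n → ℝ, x ≠ 0 ∧ ∀ i,
      (∑ α : Fin k → Fin n, A i α * ∏ t, (x (α t) : ℂ)) = 0 := by
  rintro ⟨x, hx0, hx⟩
  obtain ⟨y, hy, hA⟩ := hH
  have hn : Nonempty (Fin n) := by
    by_contra h
    exact hx0 (funext fun i => absurd ⟨i⟩ h)
  obtain ⟨i, -, hi⟩ := Finset.exists_max_image Finset.univ
    (fun j => |x j| / y j) ⟨Classical.arbitrary _, mem_univ _⟩
  set c := |x i| / y i with hc
  have hcpos : 0 < c := by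
    obtain ⟨j, hj⟩ := Function.ne_iff.mp hx0
    have : 0 < |x j| / y j := div_pos (abs_pos.mpr hj) (hy j)
    exact lt_of_lt_of_le this (hi j (mem_univ j))
  have hxle : ∀ j, |x j| ≤ c * y j := fun j =>
    (div_le_iff₀ (hy j)).mp (hi j (mem_univ j))
  have hxi : |x i| = c * y i := (div_mul_cancel₀ _ (hy i).ne').symm
  -- split the eigen-equation
  have h0 := hx i
  have hsplit : (∑ α : Fin k → Fin n, A i α * ∏ t, (x (α t) : ℂ)) =
      A i (fun _ => i) * (x i : ℂ) ^ k +
      ∑ α ∈ univ.filter (fun α : Fin k → Fin n => α ≠ fun _ => i),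
        A i α * ∏ t, (x (α t) : ℂ) := by
    rw [← Finset.sum_filter_add_sum_filter_not univ
      (fun α : Fin k → Fin n => α = fun _ => i)]
    congr 1
    rw [Finset.filter_eq']
    simp [Finset.prod_const]
  have heq : A i (fun _ => i) * (x i : ℂ) ^ k =
      -∑ α ∈ univ.filter (fun α : Fin k → Fin n => α ≠ fun _ => i),
        A i α * ∏ t, (x (α t) : ℂ) := by
    rw [hsplit] at h0; linear_combination h0
  have key : ‖A i (fun _ => i)‖ * |x i| ^ k ≤
      ∑ α ∈ univ.filter (fun α : Fin k → Fin n => α ≠ fun _ => i),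
        ‖A i α‖ * ∏ t, |x (α t)| := by
    have h1 : ‖A i (fun _ => i) * (x i : ℂ) ^ k‖
        = ‖A i (fun _ => i)‖ * |x i| ^ k := by
      rw [norm_mul, norm_pow, Complex.norm_real, Real.norm_eq_abs]
    rw [← h1, heq, norm_neg]
    refine le_trans (norm_sum_le _ _) (le_of_eq ?_)
    refine Finset.sum_congr rfl fun α _ => ?_
    rw [norm_mul, norm_prod]
    simp
  have bound : (∑ α ∈ univ.filter (fun α : Fin k → Fin n => α ≠ fun _ => i),
        ‖A i α‖ * ∏ t, |x (α t)|) ≤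
      c ^ k * ∑ α ∈ univ.filter (fun α : Fin k → Fin n => α ≠ fun _ => i),
        ‖A i α‖ * ∏ t, y (α t) := by
    rw [Finset.mul_sum]
    refine Finset.sum_le_sum fun α _ => ?_
    have hp : (∏ t, |x (α t)|) ≤ ∏ t, (c * y (α t)) :=
      Finset.prod_le_prod (fun t _ => abs_nonneg _) (fun t _ => hxle (α t))
    have hp2 : (∏ t : Fin k, (c * y (α t))) = c ^ k * ∏ t, y (α t) := by
      rw [Finset.prod_mul_distrib, Finset.prod_const, Finset.card_univ,
        Fintype.card_fin]
    calc ‖A i α‖ * ∏ t, |x (α t)|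
        ≤ ‖A i α‖ * (c ^ k * ∏ t, y (α t)) := by
          refine mul_le_mul_of_nonneg_left ?_ (norm_nonneg _)
          rw [← hp2]; exact hp
      _ = c ^ k * (‖A i α‖ * ∏ t, y (α t)) := by ring
  have hstrict : c ^ k * (∑ α ∈ univ.filter (fun α : Fin k → Fin n => α ≠ fun _ => i),
        ‖A i α‖ * ∏ t, y (α t)) < c ^ k * (tDiag A i * y i ^ k) :=
    mul_lt_mul_of_pos_left (hA i) (pow_pos hcpos k)
  have hfin : c ^ k * (tDiag A i * y i ^ k) =
      ‖A i (fun _ => i)‖ * |x i| ^ k := by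
    rw [hxi, tDiag, mul_pow]; ring
  linarith
end
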